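/- If A satisfies the RIP of order K with constant δ_K, then for any vector s ∈ ℝ^N (not necessarily sparse), ‖As‖₂ ≤ √(1+δ_K) · (‖s‖₂ + ‖s‖₁/√K). -/

import Mathlib

open Matrix Finset

/-- The ℓ₂ norm of a finite real vector. -/
noncomputable def l2 {n : ℕ} (v : Fin n → ℝ) : ℝ := Real.sqrt (∑ i, (v i) ^ 2)

/-- The ℓ₁ norm of a finite real vector. -/
noncomputable def l1 {n : ℕ} (v : Fin n → ℝ) : ℝ := ∑ i, |v i|

/-- A vector is `K`-sparse if it has at most `K` nonzero entries. -/
def IsSparse {n : ℕ} (K : ℕ) (v : Fin n → ℝ) : Prop :=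
  ∃ S : Finset (Fin n), S.card ≤ K ∧ ∀ i ∉ S, v i = 0

/-- `A` satisfies the RIP of order `K` with constant `δ`. -/
def SatisfiesRIP {m n : ℕ} (A : Matrix (Fin m) (Fin n) ℝ) (K : ℕ) (δ : ℝ) : Prop :=
  ∀ v : Fin n → ℝ, IsSparse K v →
    (1 - δ) * (l2 v) ^ 2 ≤ (l2 (A.mulVec v)) ^ 2 ∧
      (l2 (A.mulVec v)) ^ 2 ≤ (1 + δ) * (l2 v) ^ 2

/-- Spectral norm (ℓ₂ operator norm) of a matrix. -/
noncomputable def specNorm {m n : ℕ} (A : Matrix (Fin m) (Fin n) ℝ) : ℝ :=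
  sSup {c | ∃ v : Fin n → ℝ, l2 v ≤ 1 ∧ c = l2 (A.mulVec v)}

/-- The matrix with the columns of `A` indexed by `S` kept and all other columns zeroed,
representing the column-submatrix `A_S`. -/
def colRestrict {m n : ℕ} (A : Matrix (Fin m) (Fin n) ℝ) (S : Finset (Fin n)) :
    Matrix (Fin m) (Fin n) ℝ := fun i j => if j ∈ S then A i j else 0

/-- `‖A‖₂^{(K)}`: the largest spectral norm over all `K`-column submatrices of `A`. -/
noncomputable def subNorm {m n : ℕ} (A : Matrix (Fin m) (Fin n) ℝ) (K : ℕ) : ℝ :=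
  sSup {c | ∃ S : Finset (Fin n), S.card = K ∧ c = specNorm (colRestrict A S)}

/-- The pseudo-inverse `(BᵀB)⁻¹Bᵀ` of a full-column-rank matrix `B`. -/
noncomputable def pinv {m k : ℕ} (B : Matrix (Fin m) (Fin k) ℝ) : Matrix (Fin k) (Fin m) ℝ :=
  (Bᵀ * B)⁻¹ * Bᵀ

/-- `sK` is a best `K`-term (ℓ₂) approximation of `s`. -/
def IsBestApprox {n : ℕ} (K : ℕ) (s sK : Fin n → ℝ) : Prop :=
  IsSparse K sK ∧ ∀ t : Fin n → ℝ, IsSparse K t → l2 (s - sK) ≤ l2 (s - t)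

/-- Embed a vector indexed by `Fin k` into `Fin n` along an injection `f` (zero elsewhere). -/
noncomputable def embedVec {k n : ℕ} (f : Fin k → Fin n) (w : Fin k → ℝ) : Fin n → ℝ :=
  fun j => ∑ i, if f i = j then w i else 0

/- ### auxiliary lemmas -/

lemma l2_nonneg {n : ℕ} (v : Fin n → ℝ) : 0 ≤ l2 v := Real.sqrt_nonneg _

lemma l1_nonneg {n : ℕ} (v : Fin n → ℝ) : 0 ≤ l1 v :=
  Finset.sum_nonneg fun i _ => abs_nonneg _

lemma l2_sq {n : ℕ} (v : Fin n → ℝ) : (l2 v) ^ 2 = ∑ i, (v i) ^ 2 :=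
  Real.sq_sqrt (Finset.sum_nonneg fun i _ => sq_nonneg _)

lemma l2_eq_norm {n : ℕ} (v : Fin n → ℝ) :
    l2 v = ‖(WithLp.equiv 2 (Fin n → ℝ)).symm v‖ := by
  rw [EuclideanSpace.norm_eq]
  simp [l2, Real.norm_eq_abs, sq_abs]

lemma l2_add_le {n : ℕ} (u v : Fin n → ℝ) : l2 (u + v) ≤ l2 u + l2 v := by
  simp only [l2_eq_norm]
  exact norm_add_le ((WithLp.equiv 2 (Fin n → ℝ)).symm u) ((WithLp.equiv 2 (Fin n → ℝ)).symm v)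

lemma sqrt_bound {x y c : ℝ} (hx : 0 ≤ x) (hy : 0 ≤ y) (h : x ^ 2 ≤ c * y ^ 2) :
    x ≤ Real.sqrt c * y := by
  rcases le_or_gt 0 c with hc | hc
  · have h1 : x ≤ Real.sqrt (c * y ^ 2) := by
      rw [← Real.sqrt_sq hx]; exact Real.sqrt_le_sqrt h
    rwa [Real.sqrt_mul hc, Real.sqrt_sq hy] at h1
  · have hx0 : x = 0 := by nlinarith [sq_nonneg y]
    rw [hx0, Real.sqrt_eq_zero_of_nonpos hc.le, zero_mul]

lemma exists_top {n : ℕ} (s : Fin n → ℝ) (U : Finset (Fin n)) (K : ℕ) (hK : K ≤ U.card) :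
    ∃ T, T ⊆ U ∧ T.card = K ∧ ∀ i ∈ T, ∀ j ∈ U \ T, |s j| ≤ |s i| := by
  induction K with
  | zero => exact ⟨∅, empty_subset _, rfl, by simp⟩
  | succ k ih =>
    obtain ⟨T, hTU, hTc, hTop⟩ := ih (le_trans (Nat.le_succ k) hK)
    have hne : (U \ T).Nonempty := by
      rw [← Finset.card_pos, Finset.card_sdiff_of_subset hTU, hTc]; omega
    obtain ⟨j₀, hj₀, hmax⟩ := Finset.exists_max_image (U \ T) (fun j => |s j|) hne
    have hj₀T : j₀ ∉ T := (Finset.mem_sdiff.mp hj₀).2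
    refine ⟨insert j₀ T, Finset.insert_subset (Finset.mem_sdiff.mp hj₀).1 hTU, ?_, ?_⟩
    · rw [Finset.card_insert_of_notMem hj₀T, hTc]
    · intro i hi j hj
      have hjT : j ∈ U \ T := by
        rw [Finset.mem_sdiff] at hj ⊢
        exact ⟨hj.1, fun hjT => hj.2 (Finset.mem_insert_of_mem hjT)⟩
      rcases Finset.mem_insert.mp hi with rfl | hi
      · exact hmax j hjT
      · exact hTop i hi j hjT

/- restriction of a vector to a set of coordinates, and its complement -/
def restr {n : ℕ} (T : Finset (Fin n)) (s : Fin n → ℝ) : Fin n → ℝ :=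
  fun i => if i ∈ T then s i else 0
def corestr {n : ℕ} (T : Finset (Fin n)) (s : Fin n → ℝ) : Fin n → ℝ :=
  fun i => if i ∈ T then 0 else s i

lemma restr_add_corestr {n : ℕ} (T : Finset (Fin n)) (s : Fin n → ℝ) :
    restr T s + corestr T s = s := by
  funext i; simp only [Pi.add_apply, restr, corestr]; split <;> simp

lemma rip_bound {m n : ℕ} {A : Matrix (Fin m) (Fin n) ℝ} {K : ℕ} {δ : ℝ}
    (h : SatisfiesRIP A K δ) (T : Finset (Fin n)) (hT : T.card ≤ K) (s : Fin n → ℝ) :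
    l2 (A.mulVec (restr T s)) ≤ Real.sqrt (1 + δ) * l2 (restr T s) := by
  have hs : IsSparse K (restr T s) := ⟨T, hT, fun i hi => if_neg hi⟩
  exact sqrt_bound (l2_nonneg _) (l2_nonneg _) (h _ hs).2

lemma l2_restr_sq {n : ℕ} (T : Finset (Fin n)) (s : Fin n → ℝ) :
    (l2 (restr T s)) ^ 2 = ∑ i ∈ T, (s i) ^ 2 := by
  rw [l2_sq]
  have : ∀ i, (restr T s i) ^ 2 = if i ∈ T then (s i) ^ 2 else 0 := by
    intro i; simp only [restr]; split <;> simp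
  simp_rw [this]
  rw [Finset.sum_ite_mem, Finset.univ_inter]

lemma l2_restr_le {n : ℕ} (T : Finset (Fin n)) (s : Fin n → ℝ) : l2 (restr T s) ≤ l2 s := by
  apply Real.sqrt_le_sqrt
  apply Finset.sum_le_sum
  intro i _
  simp only [restr]; split
  · exact le_rfl
  · simpa using sq_nonneg (s i)

lemma l2_restr_le_sqrtK {n : ℕ} {T : Finset (Fin n)} {s : Fin n → ℝ} {K : ℕ} {M : ℝ}
    (hT : T.card ≤ K) (hM0 : 0 ≤ M) (hM : ∀ i, |s i| ≤ M) :
    l2 (restr T s) ≤ Real.sqrt K * M := by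
  apply sqrt_bound (l2_nonneg _) hM0
  rw [l2_restr_sq]
  calc ∑ i ∈ T, (s i) ^ 2 ≤ ∑ _i ∈ T, M ^ 2 := by
        apply Finset.sum_le_sum
        intro i _
        have h1 : |s i| ^ 2 ≤ M ^ 2 := pow_le_pow_left₀ (abs_nonneg _) (hM i) 2
        rwa [sq_abs] at h1
    _ = (T.card : ℝ) * M ^ 2 := by rw [Finset.sum_const, nsmul_eq_mul]
    _ ≤ (K : ℝ) * M ^ 2 := by
        apply mul_le_mul_of_nonneg_right _ (sq_nonneg M)
        exact_mod_cast hT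

lemma l1_split {n : ℕ} (T : Finset (Fin n)) (s : Fin n → ℝ) :
    l1 s = (∑ i ∈ T, |s i|) + l1 (corestr T s) := by
  have key : ∀ i, |s i| = (if i ∈ T then |s i| else 0) + |corestr T s i| := by
    intro i; simp only [corestr]; split <;> simp
  simp only [l1]
  rw [Finset.sum_congr rfl (fun i _ => key i), Finset.sum_add_distrib,
    Finset.sum_ite_mem, Finset.univ_inter]

lemma supp_corestr {n : ℕ} (T : Finset (Fin n)) (s : Fin n → ℝ) :
    (univ.filter fun i => corestr T s i ≠ 0) = (univ.filter fun i => s i ≠ 0) \ T := by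
  ext i
  by_cases hi : i ∈ T <;> simp [corestr, hi]

/- ### the key induction -/
lemma key_lemma {m n : ℕ} (A : Matrix (Fin m) (Fin n) ℝ) (K : ℕ) (hK : 0 < K) (δ : ℝ)
    (h : SatisfiesRIP A K δ) :
    ∀ N : ℕ, ∀ s : Fin n → ℝ, ∀ M : ℝ, 0 ≤ M →
      (univ.filter fun i => s i ≠ 0).card ≤ N → (∀ i, |s i| ≤ M) →
      l2 (A.mulVec s) ≤ Real.sqrt (1 + δ) * (Real.sqrt K * M + l1 s / Real.sqrt K) := by
  intro N
  induction N with
  | zero =>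
    intro s M hM0 hcard hM
    have hs : s = 0 := by
      funext i
      by_contra hi
      have hmem : i ∈ univ.filter fun i => s i ≠ 0 := Finset.mem_filter.mpr ⟨mem_univ i, hi⟩
      have := Finset.card_pos.mpr ⟨i, hmem⟩
      omega
    rw [hs, Matrix.mulVec_zero]
    have h0 : l2 (0 : Fin m → ℝ) = 0 := by simp [l2]
    rw [h0]
    have h2 := l1_nonneg (0 : Fin n → ℝ)
    have h3 : (0:ℝ) ≤ Real.sqrt K * M := mul_nonneg (Real.sqrt_nonneg _) hM0
    exact mul_nonneg (Real.sqrt_nonneg _)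
      (add_nonneg h3 (div_nonneg h2 (Real.sqrt_nonneg _)))
  | succ N ih =>
    intro s M hM0 hcard hM
    set U := univ.filter fun i => s i ≠ 0 with hU
    obtain ⟨T, hTU, hTc, hTop⟩ := exists_top s U (min K U.card) (min_le_right _ _)
    have hTK : T.card ≤ K := hTc ▸ min_le_left _ _
    have hdec : l2 (A.mulVec s) ≤ l2 (A.mulVec (restr T s)) + l2 (A.mulVec (corestr T s)) := by
      conv_lhs => rw [← restr_add_corestr T s]
      rw [Matrix.mulVec_add]
      exact l2_add_le _ _
    have h1 : l2 (A.mulVec (restr T s)) ≤ Real.sqrt (1 + δ) * (Real.sqrt K * M) :=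
      (rip_bound h T hTK s).trans
        (mul_le_mul_of_nonneg_left (l2_restr_le_sqrtK hTK hM0 hM) (Real.sqrt_nonneg _))
    by_cases hcase : U.card ≤ K
    · have hTeqU : T = U := Finset.eq_of_subset_of_card_le hTU
        (by rw [hTc, min_eq_right hcase])
      have hz : corestr T s = 0 := by
        funext i
        simp only [corestr, Pi.zero_apply]
        split
        · rfl
        · rename_i hiT
          by_contra hi
          exact hiT (hTeqU ▸ Finset.mem_filter.mpr ⟨mem_univ i, hi⟩)
      have hz2 : l2 (A.mulVec (corestr T s)) = 0 := by
        rw [hz, Matrix.mulVec_zero]; simp [l2]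
      have hl1 : 0 ≤ l1 s / Real.sqrt K := div_nonneg (l1_nonneg s) (Real.sqrt_nonneg _)
      have hs1 : 0 ≤ Real.sqrt (1 + δ) := Real.sqrt_nonneg _
      calc l2 (A.mulVec s) ≤ l2 (A.mulVec (restr T s)) + l2 (A.mulVec (corestr T s)) := hdec
        _ = l2 (A.mulVec (restr T s)) := by rw [hz2, add_zero]
        _ ≤ Real.sqrt (1 + δ) * (Real.sqrt K * M) := h1
        _ ≤ Real.sqrt (1 + δ) * (Real.sqrt K * M + l1 s / Real.sqrt K) := by nlinarith
    · have hKU : K ≤ U.card := le_of_not_ge hcase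
      have hTcK : T.card = K := by rw [hTc, min_eq_left hKU]
      have hTne : T.Nonempty := Finset.card_pos.mp (by omega)
      obtain ⟨i₀, hi₀, hmin⟩ := Finset.exists_min_image T (fun i => |s i|) hTne
      set M' := |s i₀| with hM'def
      have hM'0 : 0 ≤ M' := abs_nonneg _
      have hM' : ∀ j, |corestr T s j| ≤ M' := by
        intro j
        by_cases hj : j ∈ T
        · simp only [corestr, if_pos hj, abs_zero]; exact hM'0
        · simp only [corestr, if_neg hj]
          by_cases hjU : j ∈ U
          · exact hTop i₀ hi₀ j (Finset.mem_sdiff.mpr ⟨hjU, hj⟩)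
          · have hsj : s j = 0 := by
              by_contra hc
              exact hjU (Finset.mem_filter.mpr ⟨mem_univ j, hc⟩)
            rw [hsj, abs_zero]; exact hM'0
      have hsupp : (univ.filter fun i => corestr T s i ≠ 0).card ≤ N := by
        rw [supp_corestr, Finset.card_sdiff_of_subset hTU, hTcK]
        omega
      have h2 := ih (corestr T s) M' hM'0 hsupp hM'
      have hKpos : (0 : ℝ) < Real.sqrt K := Real.sqrt_pos.mpr (by exact_mod_cast hK)
      have hKK : Real.sqrt K * Real.sqrt K = (K : ℝ) := Real.mul_self_sqrt (Nat.cast_nonneg K)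
      have hsum : (K : ℝ) * M' ≤ ∑ i ∈ T, |s i| := by
        have hc := Finset.card_nsmul_le_sum T (fun i => |s i|) M' (fun i hi => hmin i hi)
        rw [hTcK, nsmul_eq_mul] at hc
        exact_mod_cast hc
      have hKM' : Real.sqrt K * M' ≤ (∑ i ∈ T, |s i|) / Real.sqrt K := by
        rw [le_div_iff₀ hKpos]
        nlinarith
      have h3 : Real.sqrt K * M' + l1 (corestr T s) / Real.sqrt K ≤ l1 s / Real.sqrt K := by
        rw [l1_split T s, add_div]
        exact add_le_add_left hKM' _
      calc l2 (A.mulVec s) ≤ l2 (A.mulVec (restr T s)) + l2 (A.mulVec (corestr T s)) := hdec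
        _ ≤ Real.sqrt (1 + δ) * (Real.sqrt K * M) + Real.sqrt (1 + δ) * (l1 s / Real.sqrt K) :=
          add_le_add h1 (h2.trans (mul_le_mul_of_nonneg_left h3 (Real.sqrt_nonneg _)))
        _ = Real.sqrt (1 + δ) * (Real.sqrt K * M + l1 s / Real.sqrt K) := by ring


/-- RIP bound for general (not necessarily sparse) signals. -/
theorem stmt1 {m n : ℕ} (A : Matrix (Fin m) (Fin n) ℝ) (K : ℕ) (hK : 0 < K) (δ : ℝ)
    (h : SatisfiesRIP A K δ) (s : Fin n → ℝ) :
    l2 (A.mulVec s) ≤ Real.sqrt (1 + δ) * (l2 s + l1 s / Real.sqrt K) := by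
  set U := univ.filter fun i => s i ≠ 0 with hU
  obtain ⟨T, hTU, hTc, hTop⟩ := exists_top s U (min K U.card) (min_le_right _ _)
  have hTK : T.card ≤ K := hTc ▸ min_le_left _ _
  have hdec : l2 (A.mulVec s) ≤ l2 (A.mulVec (restr T s)) + l2 (A.mulVec (corestr T s)) := by
    conv_lhs => rw [← restr_add_corestr T s]
    rw [Matrix.mulVec_add]
    exact l2_add_le _ _
  have h1 : l2 (A.mulVec (restr T s)) ≤ Real.sqrt (1 + δ) * l2 s :=
    (rip_bound h T hTK s).trans
      (mul_le_mul_of_nonneg_left (l2_restr_le T s) (Real.sqrt_nonneg _))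
  have hs1 : 0 ≤ Real.sqrt (1 + δ) := Real.sqrt_nonneg _
  have hl1 : 0 ≤ l1 s / Real.sqrt K := div_nonneg (l1_nonneg s) (Real.sqrt_nonneg _)
  by_cases hcase : U.card ≤ K
  · have hTeqU : T = U := Finset.eq_of_subset_of_card_le hTU
      (by rw [hTc, min_eq_right hcase])
    have hz : corestr T s = 0 := by
      funext i
      simp only [corestr, Pi.zero_apply]
      split
      · rfl
      · rename_i hiT
        by_contra hi
        exact hiT (hTeqU ▸ Finset.mem_filter.mpr ⟨mem_univ i, hi⟩)
    have hz2 : l2 (A.mulVec (corestr T s)) = 0 := by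
      rw [hz, Matrix.mulVec_zero]; simp [l2]
    calc l2 (A.mulVec s) ≤ l2 (A.mulVec (restr T s)) + l2 (A.mulVec (corestr T s)) := hdec
      _ = l2 (A.mulVec (restr T s)) := by rw [hz2, add_zero]
      _ ≤ Real.sqrt (1 + δ) * l2 s := h1
      _ ≤ Real.sqrt (1 + δ) * (l2 s + l1 s / Real.sqrt K) := by nlinarith
  · have hKU : K ≤ U.card := le_of_not_ge hcase
    have hTcK : T.card = K := by rw [hTc, min_eq_left hKU]
    have hTne : T.Nonempty := Finset.card_pos.mp (by omega)
    obtain ⟨i₀, hi₀, hmin⟩ := Finset.exists_min_image T (fun i => |s i|) hTne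
    set M' := |s i₀| with hM'def
    have hM'0 : 0 ≤ M' := abs_nonneg _
    have hM' : ∀ j, |corestr T s j| ≤ M' := by
      intro j
      by_cases hj : j ∈ T
      · simp only [corestr, if_pos hj, abs_zero]; exact hM'0
      · simp only [corestr, if_neg hj]
        by_cases hjU : j ∈ U
        · exact hTop i₀ hi₀ j (Finset.mem_sdiff.mpr ⟨hjU, hj⟩)
        · have hsj : s j = 0 := by
            by_contra hc
            exact hjU (Finset.mem_filter.mpr ⟨mem_univ j, hc⟩)
          rw [hsj, abs_zero]; exact hM'0
    have h2 := key_lemma A K hK δ h _ (corestr T s) M' hM'0 le_rfl hM'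
    have hKpos : (0 : ℝ) < Real.sqrt K := Real.sqrt_pos.mpr (by exact_mod_cast hK)
    have hKK : Real.sqrt K * Real.sqrt K = (K : ℝ) := Real.mul_self_sqrt (Nat.cast_nonneg K)
    have hsum : (K : ℝ) * M' ≤ ∑ i ∈ T, |s i| := by
      have hc := Finset.card_nsmul_le_sum T (fun i => |s i|) M' (fun i hi => hmin i hi)
      rw [hTcK, nsmul_eq_mul] at hc
      exact_mod_cast hc
    have hKM' : Real.sqrt K * M' ≤ (∑ i ∈ T, |s i|) / Real.sqrt K := by
      rw [le_div_iff₀ hKpos]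
      nlinarith
    have h3 : Real.sqrt K * M' + l1 (corestr T s) / Real.sqrt K ≤ l1 s / Real.sqrt K := by
      rw [l1_split T s, add_div]
      exact add_le_add_left hKM' _
    calc l2 (A.mulVec s) ≤ l2 (A.mulVec (restr T s)) + l2 (A.mulVec (corestr T s)) := hdec
      _ ≤ Real.sqrt (1 + δ) * l2 s + Real.sqrt (1 + δ) * (l1 s / Real.sqrt K) :=
        add_le_add h1 (h2.trans (mul_le_mul_of_nonneg_left h3 (Real.sqrt_nonneg _)))
      _ = Real.sqrt (1 + δ) * (l2 s + l1 s / Real.sqrt K) := by ring
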